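/- If M is a matroid on a totally ordered ground set E, then for every basis B, the set of internally active elements of B is contained in the lexicographically smallest basis B₀. -/

import Mathlib

variable {α : Type*} [LinearOrder α] [DecidableEq α] [Fintype α]

/-- A (abstract) simplicial complex: a downward closed family of finite sets. -/
def IsComplex (Δ : Finset α → Prop) : Prop :=
  ∀ ⦃s t : Finset α⦄, Δ t → s ⊆ t → Δ s

/-- A simplicial complex with all faces contained in the ground set `E`. -/
def IsComplexOn (E : Finset α) (Δ : Finset α → Prop) : Prop :=
  (∀ ⦃s⦄, Δ s → s ⊆ E) ∧ IsComplex Δ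

/-- A facet (basis): a maximal face. -/
def IsFacet (Δ : Finset α → Prop) (B : Finset α) : Prop :=
  Δ B ∧ ∀ ⦃C⦄, Δ C → B ⊆ C → B = C

/-- A circuit with respect to the ground set `E`: a minimal non-face contained in `E`. -/
def IsCircuitOn (E : Finset α) (Δ : Finset α → Prop) (C : Finset α) : Prop :=
  C ⊆ E ∧ ¬ Δ C ∧ ∀ ⦃D⦄, D ⊂ C → Δ D

/-- A circuit: a minimal non-face. -/
def IsCircuit (Δ : Finset α → Prop) (C : Finset α) : Prop :=
  ¬ Δ C ∧ ∀ ⦃D⦄, D ⊂ C → Δ D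

/-- Purity: all facets have the same cardinality. -/
def IsPure (Δ : Finset α → Prop) : Prop :=
  ∀ ⦃B B'⦄, IsFacet Δ B → IsFacet Δ B' → B.card = B'.card

/-- Lexicographic order on finite sets, comparing sorted element lists:
`B <lex B'` iff the minimum of the symmetric difference lies in `B`. -/
def lexLt (B B' : Finset α) : Prop :=
  ∃ a ∈ B \ B', ∀ b ∈ symmDiff B B', a ≤ b

def lexLe (B B' : Finset α) : Prop := B = B' ∨ lexLt B B'

/-- `B₀` is the lexicographically smallest facet of `Δ`. -/
def IsLexMinFacet (Δ : Finset α → Prop) (B₀ : Finset α) : Prop :=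
  IsFacet Δ B₀ ∧ ∀ ⦃B⦄, IsFacet Δ B → lexLe B₀ B

/-- Gale (componentwise) order: the `i`-th smallest element of `B` is at most
the `i`-th smallest element of `B'`, for all `i` (in particular equal cardinalities). -/
def galeLe (B B' : Finset α) : Prop :=
  List.Forall₂ (· ≤ ·) (Finset.sort B (· ≤ ·)) (Finset.sort B' (· ≤ ·))

/-- Quasi-exchange axiom (without the purity requirement). -/
def QE (Δ : Finset α → Prop) : Prop :=
  ∀ ⦃B₁ B₂⦄, IsFacet Δ B₁ → IsFacet Δ B₂ →
    ∀ b₁ ∈ B₁ \ B₂, (∀ b ∈ B₂ \ B₁, b < b₁) →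
      ∃ b₂ ∈ B₂ \ B₁, IsFacet Δ (insert b₂ (B₁.erase b₁))

/-- Quasi-circuit axiom (with circuits taken relative to the ground set `E`). -/
def QCon (E : Finset α) (Δ : Finset α → Prop) : Prop :=
  ∀ ⦃C₁ C₂⦄, IsCircuitOn E Δ C₁ → IsCircuitOn E Δ C₂ → C₁ ≠ C₂ →
    ∀ c ∈ C₁ ∩ C₂, (∃ m ∈ symmDiff C₁ C₂, c < m) →
      ∃ C₃, IsCircuitOn E Δ C₃ ∧ C₃ ⊆ (C₁ ∪ C₂).erase c

/-- Quasi-circuit axiom (circuits are arbitrary minimal non-faces). -/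
def QC (Δ : Finset α → Prop) : Prop :=
  ∀ ⦃C₁ C₂⦄, IsCircuit Δ C₁ → IsCircuit Δ C₂ → C₁ ≠ C₂ →
    ∀ c ∈ C₁ ∩ C₂, (∃ m ∈ symmDiff C₁ C₂, c < m) →
      ∃ C₃, IsCircuit Δ C₃ ∧ C₃ ⊆ (C₁ ∪ C₂).erase c

/-- `b` is an internally passive element of the facet `B`. -/
def InternallyPassive (Δ : Finset α → Prop) (B : Finset α) (b : α) : Prop :=
  b ∈ B ∧ ∃ b', b' < b ∧ b' ∉ B ∧ IsFacet Δ (insert b' (B.erase b))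

/-- Contraction of a face `I`. -/
def contract (Δ : Finset α → Prop) (I : Finset α) : Finset α → Prop :=
  fun J => Disjoint J I ∧ Δ (J ∪ I)

/-- Quasi-independence axiom: `Δ` is pure and for faces `I₁, I₂` with `|I₁| > |I₂|`,
if `I₁ \ I ⊆ B_{I,0}` for some `I ⊆ I₁ ∩ I₂`, then some `e ∈ I₁ \ I₂` extends `I₂`. -/
def QI (Δ : Finset α → Prop) : Prop :=
  IsPure Δ ∧ ∀ ⦃I₁ I₂ : Finset α⦄, Δ I₁ → Δ I₂ → I₂.card < I₁.card →
    (∃ I, I ⊆ I₁ ∩ I₂ ∧ ∃ B, IsLexMinFacet (contract Δ I) B ∧ I₁ \ I ⊆ B) →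
    ∃ e ∈ I₁ \ I₂, Δ (insert e I₂)

/-- The First Basis Property. -/
inductive FBP : (Finset α → Prop) → Prop
  | rank1 (Δ : Finset α → Prop) (h : ∀ s, Δ s → s.card ≤ 1) : FBP Δ
  | unique (Δ : Finset α → Prop) (B : Finset α) (hB : IsFacet Δ B)
      (hu : ∀ B', IsFacet Δ B' → B' = B) : FBP Δ
  | step (Δ : Finset α → Prop) (B₀ : Finset α) (h₀ : IsLexMinFacet Δ B₀)
      (h1 : ∀ v, Δ {v} → v ∉ B₀ → FBP (contract Δ {v}))
      (h2 : ∀ v, Δ {v} → v ∉ B₀ →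
        ∃ Bv, IsLexMinFacet (contract Δ {v}) Bv ∧ Bv ⊆ B₀) :
      FBP Δ

/-- for a matroid on a totally ordered ground set, the internally
active elements of any basis are contained in the lexicographically smallest basis. -/
theorem stmt10 (E : Finset α) (ℬ : Finset α → Prop)
    (hground : ∀ B, ℬ B → B ⊆ E) (hne : ∃ B, ℬ B)
    (hexch : ∀ B₁ B₂, ℬ B₁ → ℬ B₂ → ∀ b₁ ∈ B₁ \ B₂,
      ∃ b₂ ∈ B₂ \ B₁, ℬ (insert b₂ (B₁.erase b₁)))
    (B₀ : Finset α) (hB₀ : ℬ B₀) (hmin : ∀ B, ℬ B → lexLe B₀ B) :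
    ∀ B, ℬ B → ∀ b ∈ B,
      (¬ ∃ b', b' < b ∧ b' ∉ B ∧ ℬ (insert b' (B.erase b))) → b ∈ B₀ := by
  classical
  -- Build a matroid from the basis family.
  set Base : Set α → Prop := fun X => ∃ F : Finset α, ℬ F ∧ X = ↑F with hBasedef
  have hexch' : Matroid.ExchangeProperty Base := by
    rintro X Y ⟨F₁, hF₁, rfl⟩ ⟨F₂, hF₂, rfl⟩ a ha
    have haF : a ∈ F₁ \ F₂ := by
      simp only [Finset.mem_sdiff]
      exact ⟨by exact_mod_cast ha.1, by exact_mod_cast ha.2⟩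
    obtain ⟨b₂, hb₂, hB'⟩ := hexch F₁ F₂ hF₁ hF₂ a haF
    refine ⟨b₂, ?_, ⟨insert b₂ (F₁.erase a), hB', ?_⟩⟩
    · simp only [Set.mem_diff, Finset.coe_sdiff] at *
      exact ⟨by exact_mod_cast (Finset.mem_sdiff.1 hb₂).1,
        by exact_mod_cast (Finset.mem_sdiff.1 hb₂).2⟩
    · simp [Finset.coe_insert, Finset.coe_erase]
  obtain ⟨Bw, hBw⟩ := hne
  set M : Matroid α := Matroid.ofIsBaseOfFinite (E := (↑E : Set α)) E.finite_toSet Base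
    ⟨↑Bw, Bw, hBw, rfl⟩ hexch'
    (by rintro X ⟨F, hF, rfl⟩; exact_mod_cast hground F hF) with hMdef
  have hMbase : ∀ X, M.IsBase X ↔ Base X := fun X => Iff.rfl
  have hME : M.E = (↑E : Set α) := rfl
  have hbase : ∀ F : Finset α, ℬ F → M.IsBase ↑F := fun F hF => ⟨F, hF, rfl⟩
  intro B hB b hbB hact
  by_contra hbB₀
  have hBbase : M.IsBase (↑B : Set α) := hbase B hB
  have hB₀base : M.IsBase (↑B₀ : Set α) := hbase B₀ hB₀
  have hbE : b ∈ E := hground B hB hbB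
  set S : Set α := {x | x ∈ (↑E : Set α) ∧ x < b} with hSdef
  -- Step 1: every ground element below `b` is in the closure of `B \ {b}`.
  have hstep1 : S ⊆ M.closure (↑B \ {b}) := by
    intro x hx
    obtain ⟨hxE, hxb⟩ := hx
    by_cases hxB : x ∈ B
    · apply M.subset_closure (↑B \ {b})
        (fun y hy => hBbase.subset_ground hy.1)
      exact ⟨hxB, by simpa using hxb.ne⟩
    · by_contra hxcl
      have hIndep : M.Indep (↑B \ {b}) := hBbase.indep.subset Set.diff_subset
      have hxnot : x ∉ (↑B \ {b} : Set α) := fun h => hxB (by exact_mod_cast h.1)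
      have hins : M.Indep (insert x (↑B \ {b})) :=
        (hIndep.insert_indep_iff_of_notMem hxnot).2 ⟨hxE, hxcl⟩
      have hxnotB : x ∉ (↑B : Set α) := by exact_mod_cast hxB
      have hbase' : M.IsBase (insert x (↑B \ {b})) :=
        hBbase.exchange_isBase_of_indep hxnotB hins
      obtain ⟨F, hF, hFeq⟩ := hbase'
      have : (F : Set α) = ↑(insert x (B.erase b)) := by
        rw [← hFeq]; simp [Finset.coe_insert, Finset.coe_erase]
      have hFeq' : F = insert x (B.erase b) := Finset.coe_injective this
      exact hact ⟨x, hxb, hxB, hFeq' ▸ hF⟩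
  -- Step 2: `b` is in the closure of `S` (using lex-minimality of `B₀`).
  have hstep2 : b ∈ M.closure S := by
    by_contra hbS
    set I₀ : Finset α := B₀.filter (· < b) with hI₀def
    have hI₀S : (↑I₀ : Set α) ⊆ S := by
      intro x hx
      have hx' : x ∈ I₀ := by exact_mod_cast hx
      rw [hI₀def, Finset.mem_filter] at hx'
      exact ⟨hground B₀ hB₀ hx'.1, hx'.2⟩
    have hI₀indep : M.Indep (↑I₀ : Set α) := hB₀base.indep.subset (by
      intro x hx; have hx' : x ∈ I₀ := by exact_mod_cast hx
      exact_mod_cast Finset.mem_of_mem_filter x hx')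
    have hbI₀ : b ∉ (↑I₀ : Set α) := by
      intro h
      exact hbB₀ (Finset.mem_of_mem_filter b (by exact_mod_cast h))
    have hbclI₀ : b ∉ M.closure ↑I₀ := fun h => hbS (M.closure_subset_closure hI₀S h)
    have hins : M.Indep (insert b (↑I₀ : Set α)) :=
      (hI₀indep.insert_indep_iff_of_notMem hbI₀).2 ⟨by exact_mod_cast hbE, hbclI₀⟩
    obtain ⟨X, hXbase, hsub⟩ := hins.exists_isBase_superset
    obtain ⟨B₁, hB₁, rfl⟩ := hXbase
    have hbB₁ : b ∈ B₁ := by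
      have : b ∈ (↑B₁ : Set α) := hsub (Set.mem_insert b _)
      exact_mod_cast this
    have hI₀B₁ : I₀ ⊆ B₁ := by
      intro x hx
      have : (x : α) ∈ (↑B₁ : Set α) := hsub (Set.mem_insert_of_mem _ (by exact_mod_cast hx))
      exact_mod_cast this
    rcases hmin B₁ hB₁ with heq | hlt
    · exact hbB₀ (heq ▸ hbB₁)
    · obtain ⟨a, hamem, hale⟩ := hlt
      rw [Finset.mem_sdiff] at hamem
      have hab : a ≤ b := hale b (by
        rw [Finset.mem_symmDiff]
        exact Or.inr ⟨hbB₁, hbB₀⟩)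
      have hab' : a < b := lt_of_le_of_ne hab (by rintro rfl; exact hbB₀ hamem.1)
      exact hamem.2 (hI₀B₁ (Finset.mem_filter.2 ⟨hamem.1, hab'⟩))
  -- Step 3: contradiction with independence of `B`.
  have : b ∈ M.closure (↑B \ {b}) := by
    have h1 := M.closure_subset_closure hstep1
    rw [M.closure_closure] at h1
    exact h1 hstep2
  exact hBbase.indep.notMem_closure_diff_of_mem hbB this
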